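/- Let C be a complete category, F : C ⇒ Set a functor, G : ∫F ⇒ Set a relatively continuous functor, and l, r : 1 ⇒ G two natural transformations from the terminal functor (global elements of G). Then the assignment (X, x) ↦ (l_{(X,x)} =_{G(X,x)} r_{(X,x)}) extends to a functor ∫F ⇒ Set which is continuous relative to the forgetful functor ∫F → C. -/

import Mathlib

open CategoryTheory Limits

universe u v w w₁ w₂

/-- A functor `K` on `A` is continuous relative to `U : A ⥤ B`. -/
def RelativelyContinuous {A : Type w₁} [Category.{u} A] {B : Type w₂} [Category.{u} B]
    (U : A ⥤ B) (K : A ⥤ Type w) : Prop :=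
  ∀ (J : Type u) [SmallCategory J] (D : J ⥤ A) (c : Cone D),
    Nonempty (IsLimit (U.mapCone c)) → Nonempty (IsLimit (K.mapCone c))

/-- given a complete category `C`, a functor `F : C ⥤ Set`, a relatively
continuous `G : ∫F ⥤ Set`, and global elements `l, r : 1 ⟶ G`, the assignment
`(X, x) ↦ (l_{(X,x)} = r_{(X,x)})` extends to a relatively continuous functor. -/
theorem eqG_relativelyContinuous {C : Type v} [Category.{u} C] [HasLimits C]
    (F : C ⥤ Type u) (G : F.Elements ⥤ Type u)
    (hG : RelativelyContinuous (CategoryOfElements.π F) G)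
    (l r : (Functor.const F.Elements).obj (PUnit : Type u) ⟶ G) :
    ∃ K : F.Elements ⥤ Type,
      (∀ e : F.Elements, K.obj e = PLift (l.app e PUnit.unit = r.app e PUnit.unit)) ∧
      RelativelyContinuous (CategoryOfElements.π F) K := by
  have hmap : ∀ {e e' : F.Elements} (f : e ⟶ e'),
      l.app e PUnit.unit = r.app e PUnit.unit →
      l.app e' PUnit.unit = r.app e' PUnit.unit := by
    intro e e' f h
    have hl := types_congr_hom (l.naturality f) PUnit.unit
    have hr := types_congr_hom (r.naturality f) PUnit.unit
    simp only [Functor.const_obj_map, Functor.const_obj_obj, types_comp_apply, types_id_apply] at hl hr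
    rw [hl, hr, h]
  refine ⟨{ obj := fun e => PLift (l.app e PUnit.unit = r.app e PUnit.unit),
            map := fun f => TypeCat.ofHom fun h => ⟨hmap f h.down⟩,
            map_id := by intros; ext x; exact Subsingleton.elim _ _,
            map_comp := by intros; ext x; exact Subsingleton.elim _ _ }, fun e => rfl, ?_⟩
  intro J _ D c hc
  obtain ⟨t⟩ := hG J D c hc
  refine ⟨{ lift := fun s => TypeCat.ofHom fun x => ⟨?_⟩,
            fac := ?_, uniq := ?_ }⟩
  · -- show l = r at c.pt, given x : s.pt
    -- build a cone on D ⋙ G with pt PUnit and compare two morphisms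
    let s' : Cone (D ⋙ G) :=
      { pt := PUnit
        π := { app := fun j => TypeCat.ofHom fun _ => G.map (c.π.app j) (l.app c.pt PUnit.unit)
               naturality := by
                 intro i j f
                 ext u
                 simp only [Functor.comp_map, TypeCat.Fun.toFun_apply, types_comp_apply, Functor.const_obj_map, Functor.const_obj_obj, types_id_apply, TypeCat.ofHom_apply]
                 rw [← types_comp_apply (G.map _) (G.map _), ← G.map_comp, c.w] } }
    have key : ∀ (y : G.obj c.pt),
        (∀ j, G.map (c.π.app j) y = G.map (c.π.app j) (l.app c.pt PUnit.unit)) →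
        TypeCat.ofHom (fun _ : PUnit => y) = t.lift s' := by
      intro y hy
      refine t.uniq s' _ (fun j => ?_)
      ext u
      exact hy j
    have hl : TypeCat.ofHom (fun _ : PUnit => l.app c.pt PUnit.unit) = t.lift s' :=
      key _ (fun j => rfl)
    have hr : TypeCat.ofHom (fun _ : PUnit => r.app c.pt PUnit.unit) = t.lift s' := by
      refine key _ (fun j => ?_)
      have hj : l.app (D.obj j) PUnit.unit = r.app (D.obj j) PUnit.unit :=
        (s.π.app j x).down
      have hl' := types_congr_hom (l.naturality (c.π.app j)) PUnit.unit
      have hr' := types_congr_hom (r.naturality (c.π.app j)) PUnit.unit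
      simp only [Functor.const_obj_map, Functor.const_obj_obj, types_comp_apply, types_id_apply] at hl' hr'
      rw [← hr', ← hj, hl']
    have := types_congr_hom (hl.trans hr.symm) PUnit.unit
    exact this
  · intro s j; ext x; exact Subsingleton.elim (α := PLift _) _ _
  · intro s m hm; ext x; exact Subsingleton.elim (α := PLift _) _ _
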